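/- Let T be a positive self-adjoint bounded operator on L²(μ) for a σ-finite measure μ, and suppose T is positivity improving: for every f ≥ 0 with f ≠ 0, Tf > 0 almost everywhere. If λ = ‖T‖ is an eigenvalue of T, then the corresponding eigenspace is one-dimensional and is spanned by an a.e. strictly positive function. -/

import Mathlib

open MeasureTheory
open scoped InnerProductSpace

section PFFarisAux

variable {X : Type*} [MeasurableSpace X] {μ : Measure X}

private lemma pff_inner_eq (f g : Lp ℝ 2 μ) : ⟪f, g⟫_ℝ = ∫ x, f x * g x ∂μ := by
  rw [L2.inner_def]; simp only [Real.inner_apply]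

private lemma pff_integrable (f g : Lp ℝ 2 μ) : Integrable (fun x => f x * g x) μ :=
  by simpa only [Real.inner_apply] using L2.integrable_inner (𝕜 := ℝ) f g

private lemma pff_inner_nonneg (f g : Lp ℝ 2 μ) (hf : 0 ≤ᵐ[μ] ⇑f) (hg : 0 ≤ᵐ[μ] ⇑g) :
    0 ≤ ⟪f, g⟫_ℝ := by
  rw [pff_inner_eq]
  refine integral_nonneg_of_ae ?_
  filter_upwards [hf, hg] with x hfx hgx
  exact mul_nonneg hfx hgx

private lemma pff_inner_pos (f g : Lp ℝ 2 μ) (hf : 0 ≤ᵐ[μ] ⇑f) (hf0 : f ≠ 0)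
    (hg : ∀ᵐ x ∂μ, 0 < g x) : 0 < ⟪f, g⟫_ℝ := by
  have hnn : 0 ≤ ⟪f, g⟫_ℝ := pff_inner_nonneg f g hf (hg.mono fun x hx => hx.le)
  rcases hnn.lt_or_eq with h | h
  · exact h
  · exfalso
    have hz : (fun x => f x * g x) =ᵐ[μ] 0 := by
      refine (integral_eq_zero_iff_of_nonneg_ae ?_ (pff_integrable f g)).mp ?_
      · filter_upwards [hf, hg] with x hfx hgx
        exact mul_nonneg hfx hgx.le
      · rw [← pff_inner_eq]; exact h.symm
    apply hf0
    rw [Lp.eq_zero_iff_ae_eq_zero]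
    filter_upwards [hz, hg] with x h1 h2
    have hx0 : f x * g x = 0 := h1
    rcases mul_eq_zero.mp hx0 with h3 | h3
    · exact h3
    · exact absurd h3 h2.ne'

private lemma pff_inner_mono (f g h : Lp ℝ 2 μ) (hf : 0 ≤ᵐ[μ] ⇑f) (hgh : g ≤ h) :
    ⟪f, g⟫_ℝ ≤ ⟪f, h⟫_ℝ := by
  have h0 : 0 ≤ ⟪f, h - g⟫_ℝ :=
    pff_inner_nonneg f (h - g) hf ((Lp.coeFn_nonneg _).mpr (sub_nonneg.mpr hgh))
  have he : ⟪f, h - g⟫_ℝ = ⟪f, h⟫_ℝ - ⟪f, g⟫_ℝ := inner_sub_right f h g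
  linarith

private lemma pff_abs_ne_zero (f : Lp ℝ 2 μ) (hf : f ≠ 0) : |f| ≠ 0 := by
  intro h
  apply hf
  have h0 : ‖f‖ = 0 := by rw [← norm_abs_eq_norm f, h, norm_zero]
  exact norm_eq_zero.mp h0

private lemma pff_eq_of_inner {E : Type*} [NormedAddCommGroup E] [InnerProductSpace ℝ E]
    (T : E →L[ℝ] E) (v : E) (h : ⟪v, T v⟫_ℝ = ‖T‖ * ‖v‖ ^ 2) : T v = ‖T‖ • v := by
  have hx : ‖T v‖ ≤ ‖T‖ * ‖v‖ := T.le_opNorm v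
  have hy : ⟪T v, ‖T‖ • v⟫_ℝ = ‖T‖ * (‖T‖ * ‖v‖ ^ 2) := by
    rw [real_inner_smul_right, real_inner_comm, h]
  have h9 : ‖T v - ‖T‖ • v‖ ^ 2 ≤ 0 := by
    rw [norm_sub_sq_real, hy, norm_smul, Real.norm_eq_abs, abs_of_nonneg (norm_nonneg T)]
    have hsq : ‖T v‖ ^ 2 ≤ (‖T‖ * ‖v‖) ^ 2 := pow_le_pow_left₀ (norm_nonneg _) hx 2
    nlinarith [hsq]
  have hn : ‖T v - ‖T‖ • v‖ = 0 := by
    nlinarith [norm_nonneg (T v - ‖T‖ • v)]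
  exact sub_eq_zero.mp (norm_eq_zero.mp hn)

end PFFarisAux
set_option maxHeartbeats 2000000 in
theorem perron_frobenius_faris
    {X : Type*} [MeasurableSpace X] (μ : Measure X) [SigmaFinite μ]
    (T : Lp ℝ 2 μ →L[ℝ] Lp ℝ 2 μ)
    (hT_sa : IsSelfAdjoint T)
    (hT_pos : ∀ f : Lp ℝ 2 μ, 0 ≤ ⟪f, T f⟫_ℝ)
    (hT_impr : ∀ f : Lp ℝ 2 μ, 0 ≤ᵐ[μ] ⇑f → f ≠ 0 → ∀ᵐ x ∂μ, 0 < (T f : X → ℝ) x)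
    (h_eig : Module.End.HasEigenvalue (T.toLinearMap) ‖T‖) :
    ∃ g : Lp ℝ 2 μ, (∀ᵐ x ∂μ, 0 < (g : X → ℝ) x) ∧
      Module.End.eigenspace (T.toLinearMap) ‖T‖ = Submodule.span ℝ {g} := by
  obtain ⟨f, hf_mem, hf_ne⟩ := h_eig.exists_hasEigenvector
  have hTf : T f = ‖T‖ • f := Module.End.mem_eigenspace_iff.mp hf_mem
  -- the measure is nonzero
  have hμ : μ ≠ 0 := by
    intro h
    apply hf_ne
    rw [Lp.eq_zero_iff_ae_eq_zero]
    have hb : ae μ = ⊥ := ae_eq_bot.mpr h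
    rw [Filter.EventuallyEq, hb]
    exact Filter.eventually_bot
  haveI hae : (ae μ).NeBot := ae_neBot.mpr hμ
  -- T preserves nonnegativity
  have hpres : ∀ h : Lp ℝ 2 μ, 0 ≤ h → 0 ≤ T h := by
    intro h hh
    rcases eq_or_ne h 0 with rfl | hne
    · simp
    · rw [← Lp.coeFn_nonneg]
      filter_upwards [hT_impr h ((Lp.coeFn_nonneg h).mpr hh) hne] with x hx
      exact hx.le
  -- the norm is positive
  have hlam_pos : 0 < ‖T‖ := by
    rcases (norm_nonneg T).lt_or_eq with h | h
    · exact h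
    · exfalso
      have hT0 : T = 0 := norm_eq_zero.mp h.symm
      have himp := hT_impr |f| ((Lp.coeFn_nonneg _).mpr (abs_nonneg _)) (pff_abs_ne_zero f hf_ne)
      rw [hT0] at himp
      simp only [ContinuousLinearMap.zero_apply] at himp
      obtain ⟨x, hx1, hx2⟩ := (himp.and (Lp.coeFn_zero ℝ 2 μ)).exists
      rw [hx2] at hx1
      exact lt_irrefl 0 hx1
  -- key: |u| is also an eigenvector
  have key : ∀ u : Lp ℝ 2 μ, T u = ‖T‖ • u → u ≠ 0 → T |u| = ‖T‖ • |u| := by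
    intro u hTu hu
    have h1 : ⟪u, T u⟫_ℝ = ‖T‖ * ‖u‖ ^ 2 := by
      rw [hTu, real_inner_smul_right, real_inner_self_eq_norm_sq]
    have h2 : T u ≤ T |u| := by
      have h := hpres _ (sub_nonneg.mpr (le_abs_self u))
      rw [map_sub] at h
      exact sub_nonneg.mp h
    have h3 : -(T u) ≤ T |u| := by
      have hneg : -u ≤ |u| := (le_abs_self (-u)).trans_eq (abs_neg u)
      have h := hpres (|u| - -u) (sub_nonneg.mpr hneg)
      rw [map_sub, map_neg] at h
      exact sub_nonneg.mp h
    have h4 : |T u| ≤ T |u| := abs_le'.mpr ⟨h2, h3⟩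
    have h5 : ⟪u, T u⟫_ℝ ≤ ⟪|u|, |T u|⟫_ℝ := by
      rw [pff_inner_eq, pff_inner_eq]
      refine integral_mono_ae (pff_integrable u (T u)) (pff_integrable |u| |T u|) ?_
      filter_upwards [Lp.coeFn_abs u, Lp.coeFn_abs (T u)] with x hx1 hx2
      rw [hx1, hx2]
      calc u x * (T u) x ≤ |u x * (T u) x| := le_abs_self _
        _ = |u x| * |(T u) x| := abs_mul _ _
    have h6 : ⟪|u|, |T u|⟫_ℝ ≤ ⟪|u|, T |u|⟫_ℝ :=
      pff_inner_mono _ _ _ ((Lp.coeFn_nonneg _).mpr (abs_nonneg _)) h4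
    have h7 : ⟪|u|, T |u|⟫_ℝ ≤ ‖T‖ * ‖u‖ ^ 2 := by
      calc ⟪|u|, T |u|⟫_ℝ ≤ ‖|u|‖ * ‖T |u|‖ := real_inner_le_norm _ _
        _ ≤ ‖|u|‖ * (‖T‖ * ‖|u|‖) :=
            mul_le_mul_of_nonneg_left (T.le_opNorm _) (norm_nonneg _)
        _ = ‖T‖ * ‖u‖ ^ 2 := by rw [norm_abs_eq_norm]; ring
    have h8 : ⟪|u|, T |u|⟫_ℝ = ‖T‖ * ‖|u|‖ ^ 2 := by
      rw [norm_abs_eq_norm]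
      exact le_antisymm h7 (by linarith)
    exact pff_eq_of_inner T |u| h8
  -- a.e. positivity of |u| for eigenvectors u
  have habs_pos : ∀ u : Lp ℝ 2 μ, T u = ‖T‖ • u → u ≠ 0 →
      ∀ᵐ x ∂μ, 0 < (|u| : Lp ℝ 2 μ) x := by
    intro u hTu hu
    have h := hT_impr |u| ((Lp.coeFn_nonneg _).mpr (abs_nonneg _)) (pff_abs_ne_zero u hu)
    rw [key u hTu hu] at h
    filter_upwards [h, Lp.coeFn_smul ‖T‖ (|u| : Lp ℝ 2 μ)] with x h1 h2
    rw [h2, Pi.smul_apply, smul_eq_mul] at h1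
    nlinarith [hlam_pos]
  -- eigenvectors have constant sign
  have hsign : ∀ u : Lp ℝ 2 μ, T u = ‖T‖ • u → u ≠ 0 → u = |u| ∨ u = -|u| := by
    intro u hTu hu
    by_contra hcon
    push_neg at hcon
    obtain ⟨h₁, h₂⟩ := hcon
    have hp_ne : (|u| + u : Lp ℝ 2 μ) ≠ 0 := by
      intro h
      exact h₂ (eq_neg_of_add_eq_zero_right h)
    have hn_ne : (|u| - u : Lp ℝ 2 μ) ≠ 0 := by
      intro h
      exact h₁ (sub_eq_zero.mp h).symm
    have hTg : T |u| = ‖T‖ • |u| := key u hTu hu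
    have hTp : T (|u| + u) = ‖T‖ • (|u| + u) := by rw [map_add, hTu, hTg, smul_add]
    have hTn : T (|u| - u) = ‖T‖ • (|u| - u) := by rw [map_sub, hTu, hTg, smul_sub]
    have hp_nonneg : (0 : Lp ℝ 2 μ) ≤ |u| + u := by
      have hneg : -u ≤ |u| := (le_abs_self (-u)).trans_eq (abs_neg u)
      have h := sub_nonneg.mpr hneg
      rwa [sub_neg_eq_add] at h
    have hn_nonneg : (0 : Lp ℝ 2 μ) ≤ |u| - u := sub_nonneg.mpr (le_abs_self u)
    have hp_pos := hT_impr _ ((Lp.coeFn_nonneg _).mpr hp_nonneg) hp_ne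
    have hn_pos := hT_impr _ ((Lp.coeFn_nonneg _).mpr hn_nonneg) hn_ne
    rw [hTp] at hp_pos
    rw [hTn] at hn_pos
    have hfalse : ∀ᵐ x ∂μ, False := by
      filter_upwards [hp_pos, hn_pos, Lp.coeFn_smul ‖T‖ (|u| + u : Lp ℝ 2 μ),
        Lp.coeFn_smul ‖T‖ (|u| - u : Lp ℝ 2 μ), Lp.coeFn_add (|u| : Lp ℝ 2 μ) u,
        Lp.coeFn_sub (|u| : Lp ℝ 2 μ) u, Lp.coeFn_abs u] with x e1 e2 e3 e4 e5 e6 e7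
      rw [e3, Pi.smul_apply, smul_eq_mul, e5, Pi.add_apply, e7] at e1
      rw [e4, Pi.smul_apply, smul_eq_mul, e6, Pi.sub_apply, e7] at e2
      have hppos : 0 < |u x| + u x := by nlinarith [hlam_pos]
      have hnpos : 0 < |u x| - u x := by nlinarith [hlam_pos]
      rcases abs_cases (u x) with ⟨ha, _⟩ | ⟨ha, _⟩ <;> rw [ha] at hppos hnpos <;> linarith
    obtain ⟨x, hx⟩ := hfalse.exists
    exact hx
  -- assemble
  refine ⟨|f|, habs_pos f hTf hf_ne, ?_⟩
  have hg_ne : (|f| : Lp ℝ 2 μ) ≠ 0 := pff_abs_ne_zero f hf_ne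
  have hg_nonneg : 0 ≤ᵐ[μ] ⇑(|f| : Lp ℝ 2 μ) := (Lp.coeFn_nonneg _).mpr (abs_nonneg f)
  have hTg : T |f| = ‖T‖ • |f| := key f hTf hf_ne
  apply le_antisymm
  · intro w hw
    have hTw : T w = ‖T‖ • w := Module.End.mem_eigenspace_iff.mp hw
    rcases eq_or_ne w 0 with rfl | hw_ne
    · exact Submodule.zero_mem _
    · have hgg : ⟪(|f| : Lp ℝ 2 μ), (|f| : Lp ℝ 2 μ)⟫_ℝ ≠ 0 :=
        fun h => hg_ne (inner_self_eq_zero.mp h)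
      set c : ℝ := ⟪(|f| : Lp ℝ 2 μ), w⟫_ℝ / ⟪(|f| : Lp ℝ 2 μ), (|f| : Lp ℝ 2 μ)⟫_ℝ with hc
      set v : Lp ℝ 2 μ := w - c • |f| with hv
      have hTv : T v = ‖T‖ • v := by
        rw [hv, map_sub, T.map_smul, hTw, hTg, smul_sub, smul_comm]
      have hgv : ⟪(|f| : Lp ℝ 2 μ), v⟫_ℝ = 0 := by
        rw [hv, inner_sub_right, real_inner_smul_right, hc,
          div_mul_cancel₀ _ hgg, sub_self]
      rcases eq_or_ne v 0 with hv0 | hv_ne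
      · have hwc : w = c • |f| := by
          have := sub_eq_zero.mp (hv ▸ hv0)
          exact this
        rw [hwc]
        exact Submodule.smul_mem _ _ (Submodule.mem_span_singleton_self _)
      · exfalso
        have hvabs := habs_pos v hTv hv_ne
        have hposv : 0 < ⟪(|f| : Lp ℝ 2 μ), (|v| : Lp ℝ 2 μ)⟫_ℝ :=
          pff_inner_pos _ _ hg_nonneg hg_ne hvabs
        rcases hsign v hTv hv_ne with h | h
        · rw [h] at hgv
          linarith
        · rw [h, inner_neg_right] at hgv
          linarith
  · rw [Submodule.span_le, Set.singleton_subset_iff]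
    exact Module.End.mem_eigenspace_iff.mpr hTg
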